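/- Every stable matching is popular: if M is a matching in a roommates instance (graph G with strict preferences over neighbors) admitting no blocking pair, then for every matching M', the number of vertices preferring M to M' is at least the number of vertices preferring M' to M. -/

import Mathlib

/-- A roommates instance: a simple graph together with, for each vertex,
a ranking of vertices (lower rank = more preferred), injective on neighbors. -/
structure Roommates (V : Type*) where
  G : SimpleGraph V
  rank : V → V → ℕ
  rank_inj : ∀ u a b, G.Adj u a → G.Adj u b → rank u a = rank u b → a = b

variable {V : Type*}

/-- `M` encodes a matching: `M u = some v` means `u` is matched to `v`. -/
def IsMatching (R : Roommates V) (M : V → Option V) : Prop :=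
  ∀ u v, M u = some v → R.G.Adj u v ∧ M v = some u

/-- Vertex `v` prefers matching `M` to matching `M'`. -/
def Prefers (R : Roommates V) (M M' : V → Option V) (v : V) : Prop :=
  (∃ w, M v = some w ∧ M' v = none) ∨
  (∃ w w', M v = some w ∧ M' v = some w' ∧ R.rank v w < R.rank v w')

/-- `M` is popular: it never loses a head-to-head election. -/
def Popular [Fintype V] (R : Roommates V) (M : V → Option V) : Prop :=
  ∀ M', IsMatching R M' →
    {v | Prefers R M' M v}.ncard ≤ {v | Prefers R M M' v}.ncard

/-- Edge `(u,v)` blocks `M`: each endpoint is unmatched or prefers the other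
endpoint to its partner. -/
def Blocks (R : Roommates V) (M : V → Option V) (u v : V) : Prop :=
  R.G.Adj u v ∧ M u ≠ some v ∧
  (∀ w, M u = some w → R.rank u v < R.rank u w) ∧
  (∀ w, M v = some w → R.rank v u < R.rank v w)

def IsStable (R : Roommates V) (M : V → Option V) : Prop :=
  ∀ u v, ¬ Blocks R M u v

/-- `u` votes `+` for `v` against its situation in `M`
(true when `u` is unmatched or prefers `v` to its `M`-partner). -/
def VotePlus (R : Roommates V) (M : V → Option V) (u v : V) : Prop :=
  ∀ w, M u = some w → R.rank u v < R.rank u w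

/-- Non-matching edge of `G_M`, i.e. not labeled `(−,−)`. -/
def NonMatchEdge (R : Roommates V) (M : V → Option V) (u v : V) : Prop :=
  R.G.Adj u v ∧ M u ≠ some v ∧ (VotePlus R M u v ∨ VotePlus R M v u)

/-- `AltList A M b l`: the list of vertices `l` forms an alternating sequence,
whose first edge is a matching edge if `b = true` and an allowed (`A`)
non-matching edge if `b = false`. -/
def AltList (A : V → V → Prop) (M : V → Option V) : Bool → List V → Prop
  | _, [] => True
  | _, [_] => True
  | true, u :: v :: rest => M u = some v ∧ AltList A M false (v :: rest)
  | false, u :: v :: rest => A u v ∧ AltList A M true (v :: rest)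

/-- A matching of the subgraph induced on `W`. -/
def IsMatchingOn (R : Roommates V) (W : Set V) (M : V → Option V) : Prop :=
  IsMatching R M ∧ ∀ u v, M u = some v → u ∈ W ∧ v ∈ W

/-- Popularity within the subgraph induced on `W`. -/
def PopularOn (R : Roommates V) (W : Set V) (M : V → Option V) : Prop :=
  ∀ M', IsMatchingOn R W M' →
    {v | v ∈ W ∧ Prefers R M' M v}.ncard ≤ {v | v ∈ W ∧ Prefers R M M' v}.ncard

/-- Stability within the subgraph induced on `W`. -/
def StableOn (R : Roommates V) (W : Set V) (M : V → Option V) : Prop :=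
  ∀ u v, u ∈ W → v ∈ W → ¬ Blocks R M u v

/-- every stable matching is popular. -/
theorem stable_implies_popular {V : Type*} [Fintype V] (R : Roommates V)
    (M : V → Option V) (hM : IsMatching R M) (hstable : IsStable R M) :
    Popular R M := by
  intro M' hM'
  -- key claim: if v prefers M' with M'-partner u, then u prefers M
  have key : ∀ v u, Prefers R M' M v → M' v = some u → Prefers R M M' u := by
    intro v u hv hvu
    have hadj : R.G.Adj v u ∧ M' u = some v := hM' v u hvu
    -- M v ≠ some u
    have hMv : M v ≠ some u := by
      intro h
      rcases hv with ⟨w, hw, hnone⟩ | ⟨w, w', hw, hw', hr⟩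
      · rw [h] at hnone; exact Option.some_ne_none _ hnone
      · rw [hvu] at hw; rw [h] at hw'
        cases hw; cases hw'; exact lt_irrefl _ hr
    have hMu : M u ≠ some v := fun h => hMv (hM u v h).2
    by_contra hnu
    apply hstable u v
    refine ⟨hadj.1.symm, hMu, ?_, ?_⟩
    · -- u votes for v against its M-partner
      intro w hw
      have hadjuw : R.G.Adj u w := (hM u w hw).1
      have : ¬ (R.rank u w < R.rank u v) := by
        intro hlt
        exact hnu (Or.inr ⟨w, v, hw, hadj.2, hlt⟩)
      rcases lt_or_eq_of_le (not_lt.mp this) with h | h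
      · exact h
      · exact absurd hw (by rw [R.rank_inj u v w hadj.1.symm hadjuw h] at hMu; exact hMu)
    · -- v votes for u against its M-partner
      intro w hw
      rcases hv with ⟨w1, hw1, hnone⟩ | ⟨w1, w1', hw1, hw1', hr⟩
      · rw [hw] at hnone; exact absurd hnone (Option.some_ne_none _)
      · rw [hvu] at hw1; rw [hw] at hw1'
        cases hw1; cases hw1'; exact hr
  -- the injection
  apply Set.ncard_le_ncard_of_injOn (fun v => (M' v).getD v)
  · intro v hv
    simp only [Set.mem_setOf_eq] at hv ⊢
    obtain ⟨u, hu⟩ : ∃ u, M' v = some u := by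
      rcases hv with ⟨w, hw, _⟩ | ⟨w, _, hw, _, _⟩ <;> exact ⟨w, hw⟩
    rw [hu]
    exact key v u hv hu
  · intro v1 hv1 v2 hv2 heq
    simp only [Set.mem_setOf_eq] at hv1 hv2
    obtain ⟨u1, hu1⟩ : ∃ u, M' v1 = some u := by
      rcases hv1 with ⟨w, hw, _⟩ | ⟨w, _, hw, _, _⟩ <;> exact ⟨w, hw⟩
    obtain ⟨u2, hu2⟩ : ∃ u, M' v2 = some u := by
      rcases hv2 with ⟨w, hw, _⟩ | ⟨w, _, hw, _, _⟩ <;> exact ⟨w, hw⟩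
    simp only [hu1, hu2] at heq
    simp only [Option.getD_some] at heq
    subst heq
    have h1 := (hM' v1 u1 hu1).2
    have h2 := (hM' v2 u1 hu2).2
    rw [h1] at h2
    exact Option.some_injective V h2
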